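/- Long's modified Grover iteration with equal phases φ achieves exact amplitude amplification: with n = ⌈π/(4β) - 1/2⌉ where β = arcsin√(k/2^m), and φ = 2 arcsin(sin(π/(4n+2))/sin β), the final state after n iterations has all amplitude (up to global phase) on the marked subspace. -/

import Mathlib

lemma long_CH (e τ s c : ℂ) (hsc : s^2 + c^2 = 1) (hK : (e-1)^2 * s^2 = e*(τ-2)) :
    ((1 + (e-1) • Matrix.vecMulVec ![s,c] ![s,c]) * Matrix.diagonal ![e,1]) *
      ((1 + (e-1) • Matrix.vecMulVec ![s,c] ![s,c]) * Matrix.diagonal ![e,1])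
    = (e*τ) • ((1 + (e-1) • Matrix.vecMulVec ![s,c] ![s,c]) * Matrix.diagonal ![e,1]) - (e^2) • 1 := by
  ext i j
  fin_cases i <;> fin_cases j <;>
    simp only [Matrix.mul_apply, Matrix.vecMulVec, Matrix.diagonal, Matrix.one_apply,
      Fin.sum_univ_two, Matrix.smul_apply, Matrix.add_apply, Matrix.sub_apply, Matrix.of_apply,
      Matrix.cons_val', Matrix.cons_val_zero, Matrix.cons_val_one, Matrix.head_cons,
      Matrix.empty_val', Matrix.cons_val_fin_one, Matrix.head_fin_const, smul_eq_mul,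
      Fin.zero_eta, Fin.mk_one, ite_true, ite_false, if_true, if_false, Fin.isValue,
      one_ne_zero, zero_ne_one, reduceIte, Matrix.one_apply_eq, mul_one, mul_zero, one_mul]
  · linear_combination (e*s^2 - 2*e^2*s^2 + e^3*s^2) * hsc + (e - e*s^2 + e^2*s^2) * hK
  · linear_combination (s*c - 2*e*s*c + e^2*s*c) * hsc + (-s*c + e*s*c) * hK
  · linear_combination (e*s*c - 2*e^2*s*c + e^3*s*c) * hsc + (-e*s*c + e^2*s*c) * hK
  · linear_combination (-1 + c^2 + 2*e - 2*e*c^2 - e^2 + e^2*c^2) * hsc + (1 - c^2 + e*c^2) * hK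

lemma long_closed_form (φ θ s c : ℝ) (hsc : s^2 + c^2 = 1)
    (hθ : Real.sin (φ/2) * s = Real.sin θ) (hcθ : Real.cos θ ≠ 0) (j : ℕ) :
    ((((1 + (Complex.exp ((φ:ℂ) * Complex.I) - 1) •
          Matrix.vecMulVec ![(s:ℂ), (c:ℂ)] ![(s:ℂ), (c:ℂ)]) *
        Matrix.diagonal ![Complex.exp ((φ:ℂ) * Complex.I), 1]) ^ j).mulVec ![(s:ℂ), (c:ℂ)]) 1
      = Complex.exp ((j:ℂ) * (φ:ℂ) * Complex.I) *
          ((Real.cos ((2*(j:ℝ)+1)*θ) * c / Real.cos θ : ℝ) : ℂ) := by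
  set e : ℂ := Complex.exp ((φ:ℂ) * Complex.I) with he_def
  set τ : ℝ := 2 * Real.cos (2*θ) with hτ_def
  set Q : Matrix (Fin 2) (Fin 2) ℂ :=
    (1 + (e - 1) • Matrix.vecMulVec ![(s:ℂ), (c:ℂ)] ![(s:ℂ), (c:ℂ)]) *
      Matrix.diagonal ![e, 1] with hQ_def
  set ψ : Fin 2 → ℂ := ![(s:ℂ), (c:ℂ)] with hψ_def
  have hctC : Complex.cos ((θ:ℂ)) ≠ 0 := by
    rw [← Complex.ofReal_cos]; exact_mod_cast hcθ
  have he1 : e - 1 = Complex.exp ((↑(φ/2) : ℂ) * Complex.I) * (2 * Complex.I * (Real.sin (φ/2) : ℂ)) := by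
    have hsplit : (φ:ℂ) * Complex.I = (↑(φ/2):ℂ) * Complex.I + (↑(φ/2):ℂ) * Complex.I := by
      push_cast; ring
    rw [he_def, hsplit, Complex.exp_add]
    have hs : (Real.sin (φ/2) : ℂ) = Complex.sin ((φ/2 : ℝ):ℂ) := by rw [Complex.ofReal_sin]
    have h4 : Complex.exp (-(↑(φ/2):ℂ) * Complex.I) * Complex.exp ((↑(φ/2):ℂ) * Complex.I) = 1 := by
      rw [← Complex.exp_add]; norm_num
    rw [hs, Complex.sin]
    linear_combination (Complex.exp ((↑(φ/2):ℂ)*Complex.I)^2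
        - Complex.exp ((↑(φ/2):ℂ)*Complex.I)*Complex.exp (-(↑(φ/2):ℂ)*Complex.I)) * Complex.I_sq
      + h4
  have hτc : ((τ:ℝ):ℂ) - 2 = -(4 * ((Real.sin (φ/2) : ℝ):ℂ)^2 * (s:ℂ)^2) := by
    have hr : τ - 2 = -(4 * (Real.sin (φ/2))^2 * s^2) := by
      have h1 : Real.cos (2*θ) = 1 - 2*Real.sin θ^2 := by
        linear_combination Real.cos_two_mul θ + 2 * Real.sin_sq_add_cos_sq θ
      rw [hτ_def, h1, ← hθ]; ring
    calc ((τ:ℝ):ℂ) - 2 = ((τ - 2 : ℝ) : ℂ) := by push_cast; ring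
    _ = _ := by rw [hr]; push_cast; ring
  have hK : (e-1)^2 * (s:ℂ)^2 = e * (((τ:ℝ):ℂ) - 2) := by
    rw [hτc, he1]
    have h3 : Complex.exp ((↑(φ/2):ℂ) * Complex.I) * Complex.exp ((↑(φ/2):ℂ) * Complex.I) = e := by
      rw [he_def, ← Complex.exp_add]; congr 1; push_cast; ring
    rw [← h3]
    linear_combination (4 * ((Real.sin (φ/2):ℝ):ℂ)^2 * (s:ℂ)^2 *
      (Complex.exp ((↑(φ/2):ℂ) * Complex.I) * Complex.exp ((↑(φ/2):ℂ) * Complex.I))) * Complex.I_sq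
  have hscC : (s:ℂ)^2 + (c:ℂ)^2 = 1 := by
    have := congrArg (fun x : ℝ => (x : ℂ)) hsc
    push_cast at this; exact this
  have hCH : Q * Q = (e * (τ:ℂ)) • Q - (e^2) • 1 := long_CH e (τ:ℂ) _ _ hscC hK
  have hrec : ∀ i : ℕ, ((Q^(i+2)).mulVec ψ) 1
      = (e * (τ:ℂ)) * ((Q^(i+1)).mulVec ψ) 1 - e^2 * ((Q^i).mulVec ψ) 1 := by
    intro i
    have hp : Q^(i+2) = (e * (τ:ℂ)) • Q^(i+1) - (e^2) • Q^i := by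
      have h5 : Q^(i+2) = Q^i * (Q * Q) := by rw [← sq, ← pow_add]
      rw [h5, hCH, Matrix.mul_sub, Matrix.mul_smul, Matrix.mul_smul, mul_one, ← pow_succ]
    rw [hp, Matrix.sub_mulVec, Matrix.smul_mulVec, Matrix.smul_mulVec]
    simp [smul_eq_mul]
  have hτC : (τ:ℂ) = 2 * Complex.cos (2*(θ:ℂ)) := by
    rw [hτ_def]; push_cast; ring
  have key : ∀ i : ℕ, ((Q^i).mulVec ψ) 1
      = Complex.exp ((i:ℂ) * (φ:ℂ) * Complex.I) *
          ((Real.cos ((2*(i:ℝ)+1)*θ) * c / Real.cos θ : ℝ) : ℂ) ∧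
      ((Q^(i+1)).mulVec ψ) 1
      = Complex.exp (((i+1 : ℕ):ℂ) * (φ:ℂ) * Complex.I) *
          ((Real.cos ((2*((i+1 : ℕ):ℝ)+1)*θ) * c / Real.cos θ : ℝ) : ℂ) := by
    intro i
    induction i with
    | zero =>
      constructor
      · simp only [Nat.cast_zero, zero_mul, Complex.exp_zero, one_mul, pow_zero,
          Matrix.one_mulVec]
        have h6 : ψ 1 = (c:ℂ) := by simp [hψ_def]
        have h7 : Real.cos ((2*(0:ℝ)+1)*θ) * c / Real.cos θ = c := by
          rw [show (2*(0:ℝ)+1)*θ = θ by ring]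
          field_simp
        rw [h6, h7]
      · push_cast
        simp only [pow_one, one_mul, Nat.cast_one]
        simp only [hQ_def, hψ_def, Matrix.mulVec, dotProduct, Fin.sum_univ_two,
          Matrix.mul_apply, Matrix.vecMulVec, Matrix.diagonal, Matrix.add_apply,
          Matrix.smul_apply, Matrix.one_apply, Matrix.of_apply, Matrix.cons_val',
          Matrix.cons_val_zero, Matrix.cons_val_one, Matrix.head_cons, Matrix.empty_val',
          Matrix.cons_val_fin_one, Matrix.head_fin_const, smul_eq_mul, Fin.isValue,
          one_ne_zero, zero_ne_one, reduceIte, mul_one, mul_zero, one_mul, zero_mul,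
          ite_true, ite_false]
        norm_num
        rw [← he_def]
        have hc3 : Complex.cos (3*(θ:ℂ)) = ((τ:ℂ) - 1) * Complex.cos ((θ:ℂ)) := by
          rw [hτC, show (3:ℂ)*(θ:ℂ) = 2*(θ:ℂ) + (θ:ℂ) by ring, Complex.cos_add,
            show (2:ℂ)*(θ:ℂ) = (θ:ℂ) + (θ:ℂ) by ring, Complex.cos_add, Complex.sin_add]
          have := Complex.sin_sq_add_cos_sq ((θ:ℂ))
          linear_combination (-Complex.cos ((θ:ℂ))) * this
        rw [hc3]
        have h8 : ((τ:ℂ) - 1) * Complex.cos ((θ:ℂ)) * (c:ℂ) / Complex.cos ((θ:ℂ))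
            = ((τ:ℂ) - 1) * (c:ℂ) := by field_simp
        rw [h8]
        linear_combination ((c:ℂ)*(e-1)) * hscC + (c:ℂ) * hK
    | succ i ih =>
      refine ⟨ih.2, ?_⟩
      show ((Q^(i+2)).mulVec ψ) 1 = _
      rw [hrec i, ih.1, ih.2]
      push_cast
      have hE1 : Complex.exp (((i:ℂ)+1) * (φ:ℂ) * Complex.I)
          = Complex.exp ((i:ℂ) * (φ:ℂ) * Complex.I) * e := by
        rw [he_def, ← Complex.exp_add]; congr 1; ring
      have hE2 : Complex.exp (((i:ℂ)+1+1) * (φ:ℂ) * Complex.I)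
          = Complex.exp ((i:ℂ) * (φ:ℂ) * Complex.I) * e * e := by
        rw [he_def, ← Complex.exp_add, ← Complex.exp_add]; congr 1; ring
      rw [hE1, hE2, hτC]
      rw [show (2*((i:ℂ)+1+1)+1)*(θ:ℂ) = (2*((i:ℂ)+1)+1)*(θ:ℂ) + 2*(θ:ℂ) by ring,
        show (2*(i:ℂ)+1)*(θ:ℂ) = (2*((i:ℂ)+1)+1)*(θ:ℂ) - 2*(θ:ℂ) by ring,
        Complex.cos_add, Complex.cos_sub]
      ring
  exact (key j).1

/-- Long's modified Grover iteration with equal phases achieves exact amplitude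
amplification: with β = arcsin √(k/2^m), n = ⌈π/(4β) - 1/2⌉ and
φ = 2 arcsin(sin(π/(4n+2))/sin β), after n iterations the state (up to global
phase) has all amplitude on the marked subspace, i.e. its component on the
unmarked basis state vanishes. In the 2-dimensional invariant subspace spanned
by the marked state |g⟩ = (1,0) and the unmarked state |b⟩ = (0,1), the initial
state is ψ = (sin β, cos β) and one iteration is
Q = (I + (e^{iφ}-1)|ψ⟩⟨ψ|)·S_χ(φ), S_χ(φ) = diag(e^{iφ}, 1) (up to global phase). -/
theorem long_exact_amplitude_amplification (k m : ℕ) (hk : 1 ≤ k) (hkm : k ≤ 2 ^ m) :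
    let β : ℝ := Real.arcsin (Real.sqrt ((k : ℝ) / 2 ^ m))
    let n : ℕ := ⌈Real.pi / (4 * β) - 1 / 2⌉₊
    let φ : ℝ := 2 * Real.arcsin (Real.sin (Real.pi / (4 * (n : ℝ) + 2)) / Real.sin β)
    let ψ : Fin 2 → ℂ := ![(Real.sin β : ℂ), (Real.cos β : ℂ)]
    let Sχ : Matrix (Fin 2) (Fin 2) ℂ :=
      Matrix.diagonal ![Complex.exp ((φ : ℂ) * Complex.I), 1]
    let Q : Matrix (Fin 2) (Fin 2) ℂ :=
      (1 + (Complex.exp ((φ : ℂ) * Complex.I) - 1) • Matrix.vecMulVec ψ ψ) * Sχ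
    ((Q ^ n).mulVec ψ) 1 = 0 := by
  intro β n φ ψ Sχ Q
  have hβ0 : 0 < β := by
    apply Real.arcsin_pos.mpr
    apply Real.sqrt_pos.mpr
    apply div_pos
    · exact_mod_cast Nat.lt_of_lt_of_le Nat.zero_lt_one hk
    · positivity
  have hβle : β ≤ Real.pi / 2 := Real.arcsin_le_pi_div_two _
  by_cases hn : n = 0
  · -- then β = π/2 and cos β = 0
    have hle : Real.pi / (4 * β) - 1 / 2 ≤ 0 := Nat.ceil_eq_zero.mp hn
    have hge : Real.pi / 2 ≤ β := by
      have h1 : Real.pi / (4 * β) ≤ 1 / 2 := by linarith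
      have h2 : Real.pi ≤ (1/2) * (4 * β) := by
        rw [div_le_iff₀ (by positivity)] at h1; linarith
      linarith
    have hβ : β = Real.pi / 2 := le_antisymm hβle hge
    have hcos : Real.cos β = 0 := by rw [hβ, Real.cos_pi_div_two]
    show ((Q ^ n).mulVec ψ) 1 = 0
    rw [hn, pow_zero, Matrix.one_mulVec]
    show ((Real.cos β : ℝ) : ℂ) = 0
    rw [hcos]; norm_num
  · -- main case
    set θ : ℝ := Real.pi / (4 * (n:ℝ) + 2) with hθ_def
    have hn1 : 1 ≤ n := Nat.one_le_iff_ne_zero.mpr hn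
    have hden : (0:ℝ) < 4 * (n:ℝ) + 2 := by positivity
    have hθpos : 0 < θ := div_pos Real.pi_pos hden
    have hθlt : θ < Real.pi / 2 := by
      rw [hθ_def, div_lt_div_iff₀ hden two_pos]
      have : (1:ℝ) ≤ (n:ℝ) := by exact_mod_cast hn1
      nlinarith [Real.pi_pos]
    have hcθ : Real.cos θ ≠ 0 := by
      have := Real.cos_pos_of_mem_Ioo ⟨by linarith [Real.pi_pos], hθlt⟩
      linarith
    have hθβ : θ ≤ β := by
      have hceil : Real.pi / (4 * β) - 1 / 2 ≤ (n:ℝ) := by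
        have := Nat.le_ceil (Real.pi / (4 * β) - 1 / 2)
        exact_mod_cast this
      have h1 : Real.pi / (4 * β) ≤ (n:ℝ) + 1/2 := by linarith
      have h2 : Real.pi ≤ ((n:ℝ) + 1/2) * (4 * β) := by
        rw [div_le_iff₀ (by positivity)] at h1; linarith
      rw [hθ_def, div_le_iff₀ hden]
      nlinarith
    have hsβ : 0 < Real.sin β :=
      Real.sin_pos_of_pos_of_lt_pi hβ0 (by linarith [Real.pi_pos])
    have hsθβ : Real.sin θ ≤ Real.sin β := by
      apply Real.strictMonoOn_sin.monotoneOn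
      · constructor <;> [linarith [Real.pi_pos]; linarith]
      · constructor <;> [linarith [Real.pi_pos]; linarith]
      · exact hθβ
    have hsθ0 : 0 ≤ Real.sin θ := le_of_lt (Real.sin_pos_of_pos_of_lt_pi hθpos
      (by linarith [Real.pi_pos]))
    have hφhalf : Real.sin (φ/2) * Real.sin β = Real.sin θ := by
      have h1 : φ / 2 = Real.arcsin (Real.sin θ / Real.sin β) := by
        show (2 * Real.arcsin (Real.sin θ / Real.sin β)) / 2 = _
        ring
      rw [h1, Real.sin_arcsin]
      · field_simp
      · have : (0:ℝ) ≤ Real.sin θ / Real.sin β := div_nonneg hsθ0 (le_of_lt hsβ)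
        linarith
      · rw [div_le_one hsβ]; exact hsθβ
    have hsc : Real.sin β ^ 2 + Real.cos β ^ 2 = 1 := Real.sin_sq_add_cos_sq β
    have hmain := long_closed_form φ θ (Real.sin β) (Real.cos β) hsc hφhalf hcθ n
    show ((Q ^ n).mulVec ψ) 1 = 0
    have hQψ : ((Q ^ n).mulVec ψ) 1 = Complex.exp ((n:ℂ) * (φ:ℂ) * Complex.I) *
        ((Real.cos ((2*(n:ℝ)+1)*θ) * Real.cos β / Real.cos θ : ℝ) : ℂ) := hmain
    rw [hQψ]
    have hang : (2*(n:ℝ)+1)*θ = Real.pi / 2 := by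
      rw [hθ_def]
      field_simp
      ring
    rw [hang, Real.cos_pi_div_two]
    norm_num
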